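/- McDiarmid's bounded differences inequality: let X₁,…,Xₙ be independent random variables taking values in a set A, and let f: Aⁿ → ℝ satisfy, for each i, sup |f(x₁,…,xᵢ,…,xₙ) − f(x₁,…,xᵢ′,…,xₙ)| ≤ cᵢ over all choices of coordinates. Then for all ε > 0, P(f(X₁,…,Xₙ) − E f(X₁,…,Xₙ) ≥ ε) ≤ exp(−2ε²/Σᵢ cᵢ²). -/

import Mathlib

open MeasureTheory Real

lemma mcd_integrable {Ω : Type*} [MeasurableSpace Ω] {μ : Measure Ω} [IsFiniteMeasure μ]
    {g : Ω → ℝ} (hg : Measurable g) {M : ℝ} (hM : ∀ ω, |g ω| ≤ M) : Integrable g μ :=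
  (integrable_const M).mono' hg.aestronglyMeasurable (Filter.Eventually.of_forall hM)

lemma mcd_analytic {p : ℝ} (hp0 : 0 ≤ p) (hp1 : p ≤ 1) (h : ℝ) :
    (1 - p) + p * exp h ≤ exp (p * h + h ^ 2 / 8) := by
  set D : ℝ → ℝ := fun x => 1 - p + p * exp x with hDdef
  have hD : ∀ x : ℝ, 0 < D x := by
    intro x
    have := exp_pos x
    rcases eq_or_lt_of_le hp0 with hp | hp
    · simp [hDdef, ← hp]
    · simp only [hDdef]; nlinarith
  set φ : ℝ → ℝ := fun x => p * x + x ^ 2 / 8 - log (D x) with hφdef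
  set φ1 : ℝ → ℝ := fun x => p + x / 4 - p * exp x / D x with hφ1def
  have hDd : ∀ x, HasDerivAt D (p * exp x) x := fun x =>
    ((hasDerivAt_exp x).const_mul p).const_add (1 - p)
  have hφd : ∀ x, HasDerivAt φ (φ1 x) x := by
    intro x
    have h1 : HasDerivAt (fun x : ℝ => p * x) p x := by simpa using (hasDerivAt_id x).const_mul p
    have h2 : HasDerivAt (fun x : ℝ => x ^ 2 / 8) (x / 4) x := by
      have := (hasDerivAt_pow 2 x).div_const 8
      rw [show x / 4 = ((2 : ℕ) : ℝ) * x ^ (2 - 1) / 8 by norm_num; ring]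
      exact this
    have h3 : HasDerivAt (fun x => log (D x)) (p * exp x / D x) x :=
      (hDd x).log (ne_of_gt (hD x))
    exact ((h1.add h2).sub h3)
  have hφ1d : ∀ x, HasDerivAt φ1
      (1 / 4 - (p * exp x * D x - p * exp x * (p * exp x)) / (D x) ^ 2) x := by
    intro x
    have h1 : HasDerivAt (fun x : ℝ => p + x / 4) (1 / 4) x := by
      simpa using ((hasDerivAt_id x).div_const 4).const_add p
    have h2 : HasDerivAt (fun x => p * exp x / D x)
        ((p * exp x * D x - p * exp x * (p * exp x)) / (D x) ^ 2) x :=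
      ((hasDerivAt_exp x).const_mul p).div (hDd x) (ne_of_gt (hD x))
    exact h1.sub h2
  have hφ1nn : ∀ x, 0 ≤ 1 / 4 - (p * exp x * D x - p * exp x * (p * exp x)) / (D x) ^ 2 := by
    intro x
    rw [sub_nonneg, div_le_iff₀ (pow_pos (hD x) 2)]
    have := exp_pos x
    nlinarith [sq_nonneg (1 - p - p * exp x), mul_nonneg hp0 (exp_pos x).le]
  have hφ1mono : Monotone φ1 := by
    apply monotone_of_deriv_nonneg
    · exact fun x => (hφ1d x).differentiableAt
    · intro x
      rw [(hφ1d x).deriv]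
      exact hφ1nn x
  have hφ10 : φ1 0 = 0 := by
    simp [hφ1def, hDdef]
  have hφ0 : φ 0 = 0 := by
    have : D 0 = 1 := by simp [hDdef]
    simp [hφdef, this]
  have key : ∀ x, 0 ≤ φ x := by
    intro x
    rcases le_total 0 x with hx | hx
    · have : MonotoneOn φ (Set.Ici 0) := by
        apply monotoneOn_of_deriv_nonneg (convex_Ici 0)
        · exact fun y _ => ((hφd y).differentiableAt.continuousAt).continuousWithinAt
        · exact fun y hy => (hφd y).differentiableAt.differentiableWithinAt
        · intro y hy
          rw [(hφd y).deriv]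
          have hy0 : (0:ℝ) < y := by simpa [interior_Ici] using hy
          calc (0:ℝ) = φ1 0 := hφ10.symm
            _ ≤ φ1 y := hφ1mono hy0.le
      have := this (Set.self_mem_Ici) (Set.mem_Ici.2 hx) hx
      linarith [hφ0 ▸ this]
    · have : AntitoneOn φ (Set.Iic 0) := by
        apply antitoneOn_of_deriv_nonpos (convex_Iic 0)
        · exact fun y _ => ((hφd y).differentiableAt.continuousAt).continuousWithinAt
        · exact fun y hy => (hφd y).differentiableAt.differentiableWithinAt
        · intro y hy
          rw [(hφd y).deriv]
          have hy0 : y < 0 := by simpa [interior_Iic] using hy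
          calc φ1 y ≤ φ1 0 := hφ1mono hy0.le
            _ = 0 := hφ10
      have := this (Set.mem_Iic.2 hx) (Set.self_mem_Iic) hx
      linarith [hφ0 ▸ this]
  have hlog : log (D h) ≤ p * h + h ^ 2 / 8 := by
    have := key h
    simp only [hφdef] at this
    linarith
  calc (1 - p) + p * exp h = D h := rfl
    _ = exp (log (D h)) := (exp_log (hD h)).symm
    _ ≤ exp (p * h + h ^ 2 / 8) := exp_le_exp.2 hlog

lemma mcd_hoeffding {Ω : Type*} [MeasurableSpace Ω] (μ : Measure Ω) [IsProbabilityMeasure μ]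
    {Y : Ω → ℝ} (hY : Measurable Y) {a b : ℝ} (hab : ∀ ω, Y ω ∈ Set.Icc a b) (t : ℝ) :
    ∫ ω, exp (t * Y ω) ∂μ ≤ exp (t * ∫ ω, Y ω ∂μ + t ^ 2 * (b - a) ^ 2 / 8) := by
  have hne : Nonempty Ω := by
    by_contra hc
    have : μ Set.univ = 0 := by
      simp [Set.univ_eq_empty_iff.2 (not_nonempty_iff.1 hc)]
    simp [measure_univ] at this
  have hab' : a ≤ b := by
    obtain ⟨ω⟩ := hne
    exact le_trans (hab ω).1 (hab ω).2
  have hYint : Integrable Y μ := mcd_integrable hY (M := |a| + |b|) (fun ω => abs_le.2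
    ⟨by linarith [(hab ω).1, neg_abs_le a, abs_nonneg b],
     by linarith [(hab ω).2, le_abs_self b, abs_nonneg a]⟩)
  rcases eq_or_lt_of_le hab' with heq | hlt
  · -- a = b : Y is constant
    have hYa : ∀ ω, Y ω = a := fun ω => le_antisymm (heq ▸ (hab ω).2) (hab ω).1
    have h1 : ∫ ω, exp (t * Y ω) ∂μ = exp (t * a) := by
      simp_rw [fun ω => hYa ω]; simp
    have h2 : ∫ ω, Y ω ∂μ = a := by simp_rw [fun ω => hYa ω]; simp
    rw [h1, h2, ← heq]
    simp
  · -- a < b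
    have hba : (0:ℝ) < b - a := by linarith
    set m := ∫ ω, Y ω ∂μ with hm
    have hma : a ≤ m := by
      have : ∫ _ : Ω, a ∂μ ≤ m := integral_mono (integrable_const a) hYint (fun ω => (hab ω).1)
      simpa using this
    have hmb : m ≤ b := by
      have : m ≤ ∫ _ : Ω, b ∂μ := integral_mono hYint (integrable_const b) (fun ω => (hab ω).2)
      simpa using this
    -- pointwise convexity bound
    have conv : ∀ ω, exp (t * Y ω) ≤
        (b - Y ω) / (b - a) * exp (t * a) + (Y ω - a) / (b - a) * exp (t * b) := by
      intro ω
      set y := Y ω with hy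
      have hy1 : a ≤ y := (hab ω).1
      have hy2 : y ≤ b := (hab ω).2
      have h1 : (0:ℝ) ≤ (b - y) / (b - a) := div_nonneg (by linarith) hba.le
      have h2 : (0:ℝ) ≤ (y - a) / (b - a) := div_nonneg (by linarith) hba.le
      have h3 : (b - y) / (b - a) + (y - a) / (b - a) = 1 := by field_simp; ring
      have := convexOn_exp.2 (Set.mem_univ (t * a)) (Set.mem_univ (t * b)) h1 h2 h3
      simp only [smul_eq_mul] at this
      have harg : (b - y) / (b - a) * (t * a) + (y - a) / (b - a) * (t * b) = t * y := by
        field_simp; ring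
      rwa [harg] at this
    -- integrate
    have hexpint : Integrable (fun ω => exp (t * Y ω)) μ := by
      refine mcd_integrable (by measurability) (M := exp (t * a) + exp (t * b)) (fun ω => ?_)
      rw [abs_of_pos (exp_pos _)]
      rcases le_total 0 t with ht | ht
      · have : t * Y ω ≤ t * b := mul_le_mul_of_nonneg_left (hab ω).2 ht
        linarith [exp_le_exp.2 this, (exp_pos (t * a)).le]
      · have : t * Y ω ≤ t * a := mul_le_mul_of_nonpos_left (hab ω).1 ht
        linarith [exp_le_exp.2 this, (exp_pos (t * b)).le]
    have hRHSeq : (fun ω => (b - Y ω) / (b - a) * exp (t * a) + (Y ω - a) / (b - a) * exp (t * b))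
        = fun ω => ((exp (t * a) * b - exp (t * b) * a) / (b - a))
            + ((exp (t * b) - exp (t * a)) / (b - a)) * Y ω := by
      funext ω; field_simp; ring
    have hRHSint : Integrable (fun ω => ((exp (t * a) * b - exp (t * b) * a) / (b - a))
            + ((exp (t * b) - exp (t * a)) / (b - a)) * Y ω) μ :=
      (integrable_const _).add (hYint.const_mul _)
    have step1 : ∫ ω, exp (t * Y ω) ∂μ ≤
        (b - m) / (b - a) * exp (t * a) + (m - a) / (b - a) * exp (t * b) := by
      calc ∫ ω, exp (t * Y ω) ∂μ
          ≤ ∫ ω, (((exp (t * a) * b - exp (t * b) * a) / (b - a))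
            + ((exp (t * b) - exp (t * a)) / (b - a)) * Y ω) ∂μ := by
            refine integral_mono hexpint hRHSint (fun ω => ?_)
            rw [← congrFun hRHSeq ω]
            exact conv ω
        _ = ((exp (t * a) * b - exp (t * b) * a) / (b - a))
            + ((exp (t * b) - exp (t * a)) / (b - a)) * m := by
            rw [integral_add (integrable_const _) (hYint.const_mul _), integral_const,
              integral_const_mul, probReal_univ]
            simp [hm]
        _ = (b - m) / (b - a) * exp (t * a) + (m - a) / (b - a) * exp (t * b) := by
            field_simp; ring
    set p := (m - a) / (b - a) with hp
    have hp0 : 0 ≤ p := div_nonneg (by linarith) hba.le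
    have hp1 : p ≤ 1 := by
      rw [hp, div_le_one hba]; linarith
    have hpe : p * (b - a) = m - a := by rw [hp]; field_simp
    have step2 : (b - m) / (b - a) * exp (t * a) + (m - a) / (b - a) * exp (t * b)
        = exp (t * a) * ((1 - p) + p * exp (t * (b - a))) := by
      have : exp (t * b) = exp (t * a) * exp (t * (b - a)) := by
        rw [← exp_add]; ring_nf
      rw [this, hp]
      have h1p : (b - m) / (b - a) = 1 - (m - a) / (b - a) := by field_simp; ring
      rw [h1p]; ring
    have step3 : exp (t * a) * ((1 - p) + p * exp (t * (b - a)))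
        ≤ exp (t * a) * exp (p * (t * (b - a)) + (t * (b - a)) ^ 2 / 8) :=
      mul_le_mul_of_nonneg_left (mcd_analytic hp0 hp1 _) (exp_pos _).le
    have step4 : exp (t * a) * exp (p * (t * (b - a)) + (t * (b - a)) ^ 2 / 8)
        = exp (t * m + t ^ 2 * (b - a) ^ 2 / 8) := by
      rw [← exp_add]
      congr 1
      have : p * (t * (b - a)) = t * (m - a) := by rw [mul_comm t, ← mul_assoc, hpe]; ring
      rw [this]; ring
    linarith [step1, step2 ▸ step3, step4 ▸ (step2 ▸ step3)]

lemma mcd_bdd {n : ℕ} {A : Type*} (f : (Fin n → A) → ℝ) (c : Fin n → ℝ)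
    (hdiff : ∀ (i : Fin n) (x x' : Fin n → A),
      (∀ j, j ≠ i → x j = x' j) → |f x - f x'| ≤ c i)
    (x x' : Fin n → A) : |f x - f x'| ≤ ∑ i, c i := by
  classical
  have key : ∀ s : Finset (Fin n),
      |f x - f (fun j => if j ∈ s then x' j else x j)| ≤ ∑ i ∈ s, c i := by
    intro s
    induction s using Finset.induction_on with
    | empty => simp
    | insert _ _ hi =>
      rename_i i s ih
      set g : Fin n → A := fun j => if j ∈ s then x' j else x j with hg
      set g' : Fin n → A := fun j => if j ∈ insert i s then x' j else x j with hg'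
      have hdg : ∀ j, j ≠ i → g j = g' j := by
        intro j hj
        simp only [hg, hg', Finset.mem_insert]
        by_cases h : j ∈ s <;> simp [h, hj]
      have h2 : |f g - f g'| ≤ c i := by
        rw [abs_sub_comm]
        exact hdiff i g' g (fun j hj => (hdg j hj).symm)
      calc |f x - f g'| ≤ |f x - f g| + |f g - f g'| := abs_sub_le _ _ _
        _ ≤ (∑ i ∈ s, c i) + c i := add_le_add ih h2
        _ = ∑ j ∈ insert i s, c j := by rw [Finset.sum_insert hi]; ring
  have := key Finset.univ
  simpa using this

lemma mcd_abs_integral {Ω : Type*} [MeasurableSpace Ω] (μ : Measure Ω) (h : Ω → ℝ) :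
    |∫ ω, h ω ∂μ| ≤ ∫ ω, |h ω| ∂μ := by
  simpa [Real.norm_eq_abs] using norm_integral_le_integral_norm (μ := μ) h

lemma mcd_tensor (n : ℕ) : ∀ {A : Type*} [MeasurableSpace A] (ν : Fin n → Measure A)
    [∀ i, IsProbabilityMeasure (ν i)] (f : (Fin n → A) → ℝ), Measurable f →
    ∀ (c : Fin n → ℝ), (∀ (i : Fin n) (x x' : Fin n → A),
      (∀ j, j ≠ i → x j = x' j) → |f x - f x'| ≤ c i) →
    ∀ t : ℝ,
    ∫ x, exp (t * f x) ∂(Measure.pi ν) ≤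
      exp (t * ∫ x, f x ∂(Measure.pi ν) + t ^ 2 * (∑ i, (c i) ^ 2) / 8) := by
  induction n with
  | zero =>
    intro A _ ν _ f hf c hdiff t
    have hconst : ∀ x : Fin 0 → A, f x = f default := fun x => by
      congr 1; exact Subsingleton.elim _ _
    have h1 : ∫ x, exp (t * f x) ∂(Measure.pi ν) = exp (t * f default) := by
      simp_rw [fun x => hconst x]
      simp
    have h2 : ∫ x, f x ∂(Measure.pi ν) = f default := by
      simp_rw [fun x => hconst x]
      simp
    rw [h1, h2]
    simp
  | succ n ih =>
    intro A _ ν _ f hf c hdiff t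
    have hAne : Nonempty A := by
      by_contra hc
      have h0 : (ν 0) Set.univ = 0 := by
        simp [Set.univ_eq_empty_iff.2 (not_nonempty_iff.1 hc)]
      rw [measure_univ] at h0
      exact one_ne_zero h0
    obtain ⟨a₀⟩ := hAne
    haveI : Nonempty A := ⟨a₀⟩
    have hcnn : ∀ i, 0 ≤ c i := fun i => by
      have := hdiff i (fun _ => a₀) (fun _ => a₀) (fun _ _ => rfl)
      simpa using this
    -- boundedness of f
    set M : ℝ := |f (fun _ => a₀)| + ∑ i, c i with hM
    have hfbdd : ∀ x, |f x| ≤ M := by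
      intro x
      have := mcd_bdd f c hdiff x (fun _ => a₀)
      rw [hM]
      have h2 := abs_sub_abs_le_abs_sub (f x) (f (fun _ => a₀))
      linarith [abs_nonneg (f (fun _ => a₀))]
    -- the equivalence
    set e := MeasurableEquiv.piFinSuccAbove (fun _ : Fin (n+1) => A) 0 with he
    have hmp : MeasurePreserving e (Measure.pi ν)
        ((ν 0).prod (Measure.pi fun j => ν ((0 : Fin (n+1)).succAbove j))) :=
      measurePreserving_piFinSuccAbove ν 0
    set ν' : Fin n → Measure A := fun j => ν ((0 : Fin (n+1)).succAbove j) with hν'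
    haveI : ∀ j, IsProbabilityMeasure (ν' j) := fun j => by rw [hν']; infer_instance
    set π' := Measure.pi ν' with hπ'
    have hesymm : ∀ (a : A) (y : Fin n → A),
        e.symm (a, y) = Fin.insertNth 0 a y := fun a y => rfl
    -- g on the product
    set g : A × (Fin n → A) → ℝ := fun z => f (e.symm z) with hg
    have hgmeas : Measurable g := hf.comp e.symm.measurable
    -- G
    set G : A → ℝ := fun a => ∫ y, g (a, y) ∂π' with hG
    have hGsm : StronglyMeasurable G :=
      hgmeas.stronglyMeasurable.integral_prod_right'
    set ν0 := ν 0 with hν0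
    -- bound on g
    have hgbdd : ∀ z, |g z| ≤ M := fun z => hfbdd _
    have hMnn : 0 ≤ M := le_trans (abs_nonneg _) (hgbdd (a₀, fun _ => a₀))
    -- per-slice measurability and integrability
    have hfa_meas : ∀ a : A, Measurable (fun y => g (a, y)) := fun a =>
      hgmeas.comp measurable_prodMk_left
    have hfa_int : ∀ a : A, Integrable (fun y => g (a, y)) π' := fun a =>
      mcd_integrable (hfa_meas a) (fun y => hgbdd _)
    -- slice bounded differences
    set c' : Fin n → ℝ := fun j => c ((0 : Fin (n+1)).succAbove j) with hc'
    have hins : ∀ (a : A) (y : Fin n → A) (k : Fin n),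
        Fin.insertNth (α := fun _ : Fin (n+1) => A) 0 a y ((0 : Fin (n+1)).succAbove k) = y k := fun a y k => by simp
    have hins0 : ∀ (a : A) (y : Fin n → A), Fin.insertNth (α := fun _ : Fin (n+1) => A) 0 a y 0 = a := fun a y => by simp
    have hslice : ∀ a : A, ∀ (j : Fin n) (y y' : Fin n → A),
        (∀ k, k ≠ j → y k = y' k) → |g (a, y) - g (a, y')| ≤ c' j := by
      intro a j y y' hyy
      refine hdiff _ _ _ ?_
      intro l hl
      rw [hesymm, hesymm]
      rcases Fin.eq_zero_or_eq_succ l with hl0 | ⟨k, rfl⟩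
      · subst hl0; rw [hins0, hins0]
      · have hk : ((0 : Fin (n+1)).succAbove k) = k.succ := by simp [Fin.succAbove]
        have h1 := hins a y k
        have h2 := hins a y' k
        rw [hk] at h1 h2
        rw [h1, h2]
        refine hyy k (fun hkj => hl ?_)
        subst hkj
        simp [Fin.succAbove]
    -- IH per slice
    have hIH : ∀ a : A, ∫ y, exp (t * g (a, y)) ∂π' ≤
        exp (t * G a + t ^ 2 * (∑ j, (c' j) ^ 2) / 8) := fun a =>
      ih ν' (fun y => g (a, y)) (hfa_meas a) c' (hslice a) t
    -- G bounded differences and bounds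
    have hGbdd : ∀ a, |G a| ≤ M := by
      intro a
      calc |G a| ≤ ∫ y, |g (a, y)| ∂π' := mcd_abs_integral _ _
        _ ≤ ∫ _y, M ∂π' := integral_mono (hfa_int a).abs (integrable_const M)
              (fun y => hgbdd _)
        _ = M := by simp
    have hGdiff : ∀ a a', |G a - G a'| ≤ c 0 := by
      intro a a'
      have hpt : ∀ y, |g (a, y) - g (a', y)| ≤ c 0 := by
        intro y
        refine hdiff 0 _ _ ?_
        intro l hl
        rw [hesymm, hesymm]
        rcases Fin.eq_zero_or_eq_succ l with hl0 | ⟨k, rfl⟩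
        · exact absurd hl0 hl
        · have hk : ((0 : Fin (n+1)).succAbove k) = k.succ := by simp [Fin.succAbove]
          have h1 := hins a y k
          have h2 := hins a' y k
          rw [hk] at h1 h2
          rw [h1, h2]
      calc |G a - G a'| = |∫ y, (g (a, y) - g (a', y)) ∂π'| := by
            rw [integral_sub (hfa_int a) (hfa_int a')]
        _ ≤ ∫ y, |g (a, y) - g (a', y)| ∂π' := mcd_abs_integral _ _
        _ ≤ ∫ _y, c 0 ∂π' := integral_mono ((hfa_int a).sub (hfa_int a')).abs
              (integrable_const _) hpt
        _ = c 0 := by simp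
    set bI : ℝ := ⨅ a, G a with hbI
    set bS : ℝ := ⨆ a, G a with hbS
    have hbddA : BddAbove (Set.range G) := ⟨M, by rintro _ ⟨a, rfl⟩; exact (abs_le.1 (hGbdd a)).2⟩
    have hbddB : BddBelow (Set.range G) := ⟨-M, by rintro _ ⟨a, rfl⟩; exact (abs_le.1 (hGbdd a)).1⟩
    have hGmem : ∀ a, G a ∈ Set.Icc bI bS := fun a =>
      ⟨ciInf_le hbddB a, le_ciSup hbddA a⟩
    have hbS_le : bS - bI ≤ c 0 := by
      have h1 : bS ≤ bI + c 0 := by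
        refine ciSup_le (fun a => ?_)
        have h2 : G a - c 0 ≤ bI := le_ciInf (fun a' => by
          have := abs_le.1 (hGdiff a a'); linarith)
        linarith
      linarith
    have hbIS : bI ≤ bS := le_trans (hGmem a₀).1 (hGmem a₀).2
    -- Hoeffding for G
    have hHoef : ∫ a, exp (t * G a) ∂ν0 ≤
        exp (t * ∫ a, G a ∂ν0 + t ^ 2 * (c 0) ^ 2 / 8) := by
      refine le_trans (mcd_hoeffding ν0 hGsm.measurable hGmem t) ?_
      rw [exp_le_exp]
      have : (bS - bI) ^ 2 ≤ (c 0) ^ 2 := by nlinarith [hcnn 0]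
      nlinarith [sq_nonneg t]
    -- integrability on the product
    have hgexp_int : Integrable (fun z => exp (t * g z)) (ν0.prod π') := by
      refine mcd_integrable (by fun_prop) (M := exp (|t| * M)) (fun z => ?_)
      rw [abs_of_pos (exp_pos _)]
      refine exp_le_exp.2 ?_
      calc t * g z ≤ |t * g z| := le_abs_self _
        _ = |t| * |g z| := abs_mul _ _
        _ ≤ |t| * M := mul_le_mul_of_nonneg_left (hgbdd z) (abs_nonneg t)
    have hg_int : Integrable g (ν0.prod π') := mcd_integrable hgmeas hgbdd
    -- main computation
    have hfubini1 : ∫ x, exp (t * f x) ∂(Measure.pi ν) =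
        ∫ a, ∫ y, exp (t * g (a, y)) ∂π' ∂ν0 := by
      have h1 := hmp.integral_comp e.measurableEmbedding (fun z => exp (t * g z))
      have h2 : ∀ x, exp (t * g (e x)) = exp (t * f x) := by
        intro x; rw [hg]; simp
      rw [← integral_prod _ hgexp_int, ← h1]
      exact integral_congr_ae (Filter.Eventually.of_forall (fun x => (h2 x).symm))
    have hfubini2 : ∫ x, f x ∂(Measure.pi ν) = ∫ a, G a ∂ν0 := by
      have h1 := hmp.integral_comp e.measurableEmbedding g
      have h2 : ∀ x, g (e x) = f x := by intro x; rw [hg]; simp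
      rw [hG, ← integral_prod _ hg_int, ← h1]
      exact integral_congr_ae (Filter.Eventually.of_forall (fun x => (h2 x).symm))
    -- middle inequality
    have hinner_meas : StronglyMeasurable (fun a => ∫ y, exp (t * g (a, y)) ∂π') :=
      (Measurable.stronglyMeasurable (by fun_prop)).integral_prod_right'
        (f := fun z => exp (t * g z))
    have hinner_bdd : ∀ a, |∫ y, exp (t * g (a, y)) ∂π'| ≤ exp (|t| * M) := by
      intro a
      calc |∫ y, exp (t * g (a, y)) ∂π'| ≤ ∫ y, |exp (t * g (a, y))| ∂π' :=
            mcd_abs_integral _ _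
        _ ≤ ∫ _y, exp (|t| * M) ∂π' := by
            refine integral_mono ?_ (integrable_const _) (fun y => ?_)
            · exact (mcd_integrable (by fun_prop) (M := exp (|t| * M)) (fun y => by
                rw [abs_abs, abs_of_pos (exp_pos _)]
                refine exp_le_exp.2 ?_
                calc t * g (a, y) ≤ |t * g (a, y)| := le_abs_self _
                  _ = |t| * |g (a, y)| := abs_mul _ _
                  _ ≤ |t| * M := mul_le_mul_of_nonneg_left (hgbdd _) (abs_nonneg t)))
            · rw [abs_of_pos (exp_pos _)]
              refine exp_le_exp.2 ?_
              calc t * g (a, y) ≤ |t * g (a, y)| := le_abs_self _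
                _ = |t| * |g (a, y)| := abs_mul _ _
                _ ≤ |t| * M := mul_le_mul_of_nonneg_left (hgbdd _) (abs_nonneg t)
        _ = exp (|t| * M) := by simp
    have hstep : ∫ a, ∫ y, exp (t * g (a, y)) ∂π' ∂ν0 ≤
        ∫ a, exp (t * G a + t ^ 2 * (∑ j, (c' j) ^ 2) / 8) ∂ν0 := by
      refine integral_mono ?_ ?_ hIH
      · exact mcd_integrable hinner_meas.measurable hinner_bdd
      · refine mcd_integrable
          (Real.measurable_exp.comp ((hGsm.measurable.const_mul t).add_const _))
          (M := exp (|t| * M + t ^ 2 * (∑ j, (c' j) ^ 2) / 8)) (fun a => ?_)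
        rw [abs_of_pos (exp_pos _)]
        refine exp_le_exp.2 ?_
        have : t * G a ≤ |t| * M := by
          calc t * G a ≤ |t * G a| := le_abs_self _
            _ = |t| * |G a| := abs_mul _ _
            _ ≤ |t| * M := mul_le_mul_of_nonneg_left (hGbdd a) (abs_nonneg t)
        exact add_le_add_left this _
    have hfact : ∫ a, exp (t * G a + t ^ 2 * (∑ j, (c' j) ^ 2) / 8) ∂ν0
        = (∫ a, exp (t * G a) ∂ν0) * exp (t ^ 2 * (∑ j, (c' j) ^ 2) / 8) := by
      simp_rw [exp_add]
      rw [integral_mul_const]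
    -- put it together
    have hsum : (∑ i, (c i) ^ 2) = (c 0) ^ 2 + ∑ j, (c' j) ^ 2 := by
      rw [Fin.sum_univ_succ]
      congr 1
    calc ∫ x, exp (t * f x) ∂(Measure.pi ν)
        = ∫ a, ∫ y, exp (t * g (a, y)) ∂π' ∂ν0 := hfubini1
      _ ≤ ∫ a, exp (t * G a + t ^ 2 * (∑ j, (c' j) ^ 2) / 8) ∂ν0 := hstep
      _ = (∫ a, exp (t * G a) ∂ν0) * exp (t ^ 2 * (∑ j, (c' j) ^ 2) / 8) := hfact
      _ ≤ exp (t * ∫ a, G a ∂ν0 + t ^ 2 * (c 0) ^ 2 / 8)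
            * exp (t ^ 2 * (∑ j, (c' j) ^ 2) / 8) :=
          mul_le_mul_of_nonneg_right hHoef (exp_pos _).le
      _ = exp (t * ∫ x, f x ∂(Measure.pi ν) + t ^ 2 * (∑ i, (c i) ^ 2) / 8) := by
          rw [← exp_add, hfubini2, hsum]
          congr 1
          ring

/-- McDiarmid's bounded differences inequality: for independent `A`-valued random variables
`X₁,…,Xₙ` and `f : Aⁿ → ℝ` with bounded differences `cᵢ`,
`P(f(X) − E f(X) ≥ ε) ≤ exp(−2ε²/Σ cᵢ²)`. -/
theorem stmt_6
    {Ω : Type*} [MeasurableSpace Ω] (μ : Measure Ω) [IsProbabilityMeasure μ]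
    {A : Type*} [MeasurableSpace A]
    (n : ℕ) (hn : 0 < n)
    (X : Fin n → Ω → A)
    (hmeas : ∀ i, Measurable (X i))
    (hindep : ProbabilityTheory.iIndepFun X μ)
    (f : (Fin n → A) → ℝ) (hf : Measurable f)
    (c : Fin n → ℝ) (hc : ∀ i, 0 ≤ c i)
    (hdiff : ∀ (i : Fin n) (x x' : Fin n → A),
      (∀ j, j ≠ i → x j = x' j) → |f x - f x'| ≤ c i)
    (ε : ℝ) (hε : 0 < ε) :
    μ {ω | ε ≤ f (fun i => X i ω) - ∫ ω', f (fun i => X i ω') ∂μ}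
      ≤ ENNReal.ofReal (exp (-2 * ε ^ 2 / ∑ i, (c i) ^ 2)) := by
  classical
  set C := ∑ i, (c i) ^ 2 with hC
  rcases eq_or_lt_of_le (Finset.sum_nonneg (fun i _ => sq_nonneg (c i)) : (0:ℝ) ≤ C)
    with hC0 | hCpos
  · -- C = 0 : RHS is exp(x/0) = exp 0 = 1
    have hCz : C = 0 := by rw [hC, ← hC0]
    rw [hCz]
    simp only [div_zero, exp_zero, ENNReal.ofReal_one]
    exact prob_le_one
  -- setup: pushforward is the product measure
  set vec : Ω → (Fin n → A) := fun ω i => X i ω with hvec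
  have hvecm : Measurable vec := measurable_pi_iff.2 hmeas
  set ν : Fin n → Measure A := fun i => Measure.map (X i) μ with hν
  haveI : ∀ i, IsProbabilityMeasure (ν i) := fun i =>
    Measure.isProbabilityMeasure_map (hmeas i).aemeasurable
  have hmap : Measure.map vec μ = Measure.pi ν := by
    refine (Measure.pi_eq (fun s hs => ?_)).symm
    rw [Measure.map_apply hvecm (MeasurableSet.univ_pi hs)]
    have hpre : vec ⁻¹' (Set.pi Set.univ s) = ⋂ i, X i ⁻¹' s i := by
      ext ω
      simp [hvec, Set.mem_pi]
    rw [hpre, hindep.meas_iInter (fun i => ⟨s i, hs i, rfl⟩)]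
    exact Finset.prod_congr rfl (fun i _ =>
      (Measure.map_apply (hmeas i) (hs i)).symm)
  haveI : IsProbabilityMeasure (Measure.pi ν) := by
    rw [← hmap]; exact Measure.isProbabilityMeasure_map hvecm.aemeasurable
  -- mean transfer
  have hmean : ∫ x, f x ∂(Measure.pi ν) = ∫ ω', f (fun i => X i ω') ∂μ := by
    rw [← hmap]
    exact integral_map hvecm.aemeasurable hf.aestronglyMeasurable
  set m : ℝ := ∫ x, f x ∂(Measure.pi ν) with hm
  -- measure transfer
  have hsetmeas : MeasurableSet {x : Fin n → A | ε ≤ f x - m} :=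
    measurableSet_le measurable_const (hf.sub measurable_const)
  have hmeasure : μ {ω | ε ≤ f (fun i => X i ω) - ∫ ω', f (fun i => X i ω') ∂μ}
      = Measure.pi ν {x | ε ≤ f x - m} := by
    rw [← hmean, ← hmap, Measure.map_apply hvecm hsetmeas]
    rfl
  rw [hmeasure]
  -- boundedness of f (need nonempty)
  have hΩne : Nonempty Ω := by
    by_contra hc'
    have h0 : μ Set.univ = 0 := by
      simp [Set.univ_eq_empty_iff.2 (not_nonempty_iff.1 hc')]
    rw [measure_univ] at h0
    exact one_ne_zero h0
  obtain ⟨ω₀⟩ := hΩne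
  set x₀ : Fin n → A := fun i => X i ω₀ with hx₀
  set M : ℝ := |f x₀| + ∑ i, c i with hMdef
  have hfbdd : ∀ x, |f x| ≤ M := by
    intro x
    have h1 := mcd_bdd f c hdiff x x₀
    have h2 := abs_sub_abs_le_abs_sub (f x) (f x₀)
    rw [hMdef]
    linarith
  -- Chernoff with t = 4ε/C
  set t : ℝ := 4 * ε / C with ht
  have htpos : 0 < t := by positivity
  set Z : (Fin n → A) → ℝ := fun x => f x - m with hZ
  have hZmeas : Measurable Z := hf.sub measurable_const
  have hint : Integrable (fun x => exp (t * Z x)) (Measure.pi ν) := by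
    refine mcd_integrable (by fun_prop) (M := exp (t * (M + |m|))) (fun x => ?_)
    rw [abs_of_pos (exp_pos _)]
    refine exp_le_exp.2 (mul_le_mul_of_nonneg_left ?_ htpos.le)
    have := hfbdd x
    have h1 := abs_sub (f x) m
    calc Z x ≤ |Z x| := le_abs_self _
      _ ≤ |f x| + |m| := abs_sub _ _
      _ ≤ M + |m| := by linarith
  have hcher := ProbabilityTheory.measure_ge_le_exp_mul_mgf (μ := Measure.pi ν)
    (X := Z) ε htpos.le hint
  -- bound the mgf
  have hmgf : ProbabilityTheory.mgf Z (Measure.pi ν) t ≤ exp (t ^ 2 * C / 8) := by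
    have h1 : ∀ x, exp (t * Z x) = exp (t * f x) * exp (-(t * m)) := by
      intro x
      rw [← exp_add, hZ]
      ring_nf
    have h2 : ProbabilityTheory.mgf Z (Measure.pi ν) t
        = (∫ x, exp (t * f x) ∂(Measure.pi ν)) * exp (-(t * m)) := by
      rw [ProbabilityTheory.mgf]
      simp_rw [h1]
      rw [integral_mul_const]
    rw [h2]
    have h3 := mcd_tensor n ν f hf c hdiff t
    calc (∫ x, exp (t * f x) ∂(Measure.pi ν)) * exp (-(t * m))
        ≤ exp (t * m + t ^ 2 * C / 8) * exp (-(t * m)) :=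
          mul_le_mul_of_nonneg_right (by rw [← hm, ← hC] at h3; exact h3) (exp_pos _).le
      _ = exp (t ^ 2 * C / 8) := by rw [← exp_add]; ring_nf
  have hfinal : (Measure.pi ν {x | ε ≤ Z x}).toReal ≤ exp (-2 * ε ^ 2 / C) := by
    refine le_trans hcher ?_
    calc exp (-t * ε) * ProbabilityTheory.mgf Z (Measure.pi ν) t
        ≤ exp (-t * ε) * exp (t ^ 2 * C / 8) :=
          mul_le_mul_of_nonneg_left hmgf (exp_pos _).le
      _ = exp (-t * ε + t ^ 2 * C / 8) := by rw [← exp_add]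
      _ = exp (-2 * ε ^ 2 / C) := by
          congr 1
          rw [ht]
          field_simp
          ring
  rw [ENNReal.le_ofReal_iff_toReal_le (measure_ne_top _ _) (exp_pos _).le]
  exact hfinal
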